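/- Existence for the nonlinear two-dimensional Volterra integral equation: under the hypotheses below, there exists a continuous function z : Ω → ℝ satisfying z(s,t) = g(s,t) + Σ_{p=1}^{m} ∫_{a_{p-1}(s)}^{a_p(s)} ∫_{b_{p-1}(t)}^{b_p(t)} k_p(s,t,σ,τ) φ(z(σ,τ)) dτ dσ for all (s,t) ∈ Ω. -/

import Mathlib

open intervalIntegral MeasureTheory

lemma contParamII {X : Type*} [TopologicalSpace X] [FirstCountableTopology X]
    [LocallyCompactSpace X]
    {F : X → ℝ → ℝ} (hF : Continuous F.uncurry)
    {u v : X → ℝ} (hu : Continuous u) (hv : Continuous v) :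
    Continuous fun x => ∫ t in u x..v x, F x t := by
  have hint : ∀ (x : X) (c d : ℝ), IntervalIntegrable (F x) MeasureTheory.volume c d :=
    fun x c d => (hF.comp (Continuous.prodMk_right x)).intervalIntegrable c d
  have h1 : ∀ x, (∫ t in u x..v x, F x t)
      = (∫ t in (0:ℝ)..v x, F x t) - ∫ t in (0:ℝ)..u x, F x t := by
    intro x
    have := integral_add_adjacent_intervals (hint x 0 (u x)) (hint x (u x) (v x))
    linarith
  simp only [h1]
  exact (continuous_parametric_intervalIntegral_of_continuous hF hv).sub
    (continuous_parametric_intervalIntegral_of_continuous hF hu)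

lemma contParamII2 {X : Type*} [TopologicalSpace X] [FirstCountableTopology X]
    [LocallyCompactSpace X]
    {H : X → ℝ → ℝ → ℝ} (hH : Continuous fun q : (X × ℝ) × ℝ => H q.1.1 q.1.2 q.2)
    {u v w z : X → ℝ} (hu : Continuous u) (hv : Continuous v)
    (hw : Continuous w) (hz : Continuous z) :
    Continuous fun x => ∫ σ in u x..v x, ∫ τ in w x..z x, H x σ τ := by
  apply contParamII (F := fun x σ => ∫ τ in w x..z x, H x σ τ) _ hu hv
  exact contParamII (F := fun (p : X × ℝ) τ => H p.1 p.2 τ) hH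
    (hw.comp continuous_fst) (hz.comp continuous_fst)

noncomputable def vcl (A x : ℝ) : ℝ := max 0 (min x A)

lemma vcl_mem {A : ℝ} (hA : 0 < A) (x : ℝ) : vcl A x ∈ Set.Icc 0 A :=
  ⟨le_max_left _ _, max_le hA.le (min_le_right _ _)⟩

lemma vcl_id {A x : ℝ} (hx : x ∈ Set.Icc 0 A) : vcl A x = x := by
  rw [vcl, min_eq_left hx.2, max_eq_right hx.1]

lemma vcl_cont (A : ℝ) : Continuous (vcl A) := by unfold vcl; fun_prop

lemma vcl_mono (A : ℝ) : Monotone (vcl A) :=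
  fun x y h => max_le_max le_rfl (min_le_min h le_rfl)

theorem volterra_aux (A : ℝ) (hA : 0 < A) (m : ℕ)
    (a b : ℕ → ℝ → ℝ)
    (ha_cont : ∀ p, Continuous (a p)) (hb_cont : ∀ p, Continuous (b p))
    (ha_mem : ∀ p s, a p s ∈ Set.Icc 0 A) (hb_mem : ∀ p t, b p t ∈ Set.Icc 0 A)
    (ha_mono : ∀ p, p < m → ∀ s, a p s ≤ a (p + 1) s)
    (hb_mono : ∀ p, p < m → ∀ t, b p t ≤ b (p + 1) t)
    (ha0 : ∀ s, a 0 s = 0) (hb0 : ∀ t, b 0 t = 0)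
    (ham : ∀ s, a m s = vcl A s) (hbm : ∀ t, b m t = vcl A t)
    (k : ℕ → ℝ × ℝ → ℝ × ℝ → ℝ)
    (hk_cont : ∀ p, Continuous fun q : (ℝ × ℝ) × (ℝ × ℝ) => k p q.1 q.2)
    (M : ℝ) (hM : 1 ≤ M)
    (hk_bd : ∀ p, p ≤ m → ∀ x w, |k p x w| ≤ M)
    (g : ℝ × ℝ → ℝ) (hg : Continuous g) (hg_bd : ∀ q, |g q| ≤ M)
    (φ : ℝ → ℝ) (L : ℝ) (hL : 0 < L) (hφ : ∀ x y, |φ x - φ y| ≤ L * |x - y|) :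
    ∃ z : ℝ × ℝ → ℝ, Continuous z ∧ ∀ s t : ℝ,
      z (s, t) = g (s, t) + ∑ p ∈ Finset.range m,
        ∫ σ in a p s..a (p + 1) s, ∫ τ in b p t..b (p + 1) t,
          k (p + 1) (s, t) (σ, τ) * φ (z (σ, τ)) := by
  classical
  have hM0 : (0:ℝ) < M := lt_of_lt_of_le one_pos hM
  have hφc : Continuous φ := by
    have h : LipschitzWith (Real.toNNReal L) φ := by
      apply LipschitzWith.of_dist_le_mul
      intro x y
      simpa [Real.dist_eq, Real.coe_toNNReal L hL.le] using hφ x y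
    exact h.continuous
  set l : ℝ := Real.sqrt (2 * L * M) with hldef
  have hl0 : 0 < l := Real.sqrt_pos.2 (by positivity)
  have hll : l * l = 2 * L * M := Real.mul_self_sqrt (by positivity)
  set W : ℝ × ℝ → ℝ := fun q => Real.exp (l * (vcl A q.1 + vcl A q.2)) with hWdef
  have hW_pos : ∀ q, 0 < W q := fun q => Real.exp_pos _
  have hW_one : ∀ q, 1 ≤ W q := by
    intro q
    have h1 := (vcl_mem hA q.1).1
    have h2 := (vcl_mem hA q.2).1
    have h3 : (0:ℝ) ≤ l * (vcl A q.1 + vcl A q.2) := mul_nonneg hl0.le (by linarith)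
    have h4 := Real.exp_le_exp.2 h3
    rw [Real.exp_zero] at h4
    exact h4
  have hW_le : ∀ q, W q ≤ Real.exp (l * (A + A)) := by
    intro q
    apply Real.exp_le_exp.2
    exact mul_le_mul_of_nonneg_left (add_le_add (vcl_mem hA q.1).2 (vcl_mem hA q.2).2) hl0.le
  have hW_cont : Continuous W :=
    Real.continuous_exp.comp (continuous_const.mul
      (((vcl_cont A).comp continuous_fst).add ((vcl_cont A).comp continuous_snd)))
  have hW_eq : ∀ σ τ : ℝ, σ ∈ Set.Icc 0 A → τ ∈ Set.Icc 0 A →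
      W (σ, τ) = Real.exp (l * σ) * Real.exp (l * τ) := by
    intro σ τ hσ hτ
    simp only [hWdef]
    rw [vcl_id hσ, vcl_id hτ, ← Real.exp_add, mul_add]
  have hφ_abs : ∀ x : ℝ, |φ x| ≤ |φ 0| + L * |x| := by
    intro x
    have h1 := hφ x 0
    have h2 := abs_sub_abs_le_abs_sub (φ x) (φ 0)
    simp only [sub_zero] at h1
    linarith
  -- the operator (conjugated by the weight W)
  set Tf : BoundedContinuousFunction (ℝ × ℝ) ℝ → (ℝ × ℝ) → ℝ := fun u q =>
    (W q)⁻¹ * (g q + ∑ p ∈ Finset.range m,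
      ∫ σ in a p q.1..a (p + 1) q.1, ∫ τ in b p q.2..b (p + 1) q.2,
        k (p + 1) q (σ, τ) * φ (W (σ, τ) * u (σ, τ))) with hTfdef
  have hsnd : Continuous fun r : (ℝ × ℝ) × ℝ => (r.1.2, r.2) :=
    (continuous_snd.comp continuous_fst).prodMk continuous_snd
  have hTf_cont : ∀ u, Continuous (Tf u) := by
    intro u
    apply Continuous.mul (hW_cont.inv₀ fun q => (hW_pos q).ne')
    apply hg.add
    apply continuous_finset_sum
    intro p _
    refine contParamII2 (X := ℝ × ℝ)
      (H := fun (q : ℝ × ℝ) σ τ => k (p + 1) q (σ, τ) * φ (W (σ, τ) * u (σ, τ)))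
      (u := fun q => a p q.1) (v := fun q => a (p + 1) q.1)
      (w := fun q => b p q.2) (z := fun q => b (p + 1) q.2) ?_ ?_ ?_ ?_ ?_
    · have hsnd2 : Continuous fun r : ((ℝ × ℝ) × ℝ) × ℝ => (r.1.2, r.2) :=
        ((continuous_snd.comp continuous_fst).prodMk continuous_snd)
      show Continuous fun r : ((ℝ × ℝ) × ℝ) × ℝ =>
        k (p + 1) r.1.1 (r.1.2, r.2) * φ (W (r.1.2, r.2) * u (r.1.2, r.2))
      have hmap : Continuous fun r : ((ℝ × ℝ) × ℝ) × ℝ => (r.1.1, (r.1.2, r.2)) :=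
        (continuous_fst.comp continuous_fst).prodMk hsnd2
      apply Continuous.mul
      · exact (hk_cont (p + 1)).comp hmap
      · exact hφc.comp ((hW_cont.comp hsnd2).mul (u.continuous.comp hsnd2))
    · exact (ha_cont p).comp continuous_fst
    · exact (ha_cont (p + 1)).comp continuous_fst
    · exact (hb_cont p).comp continuous_snd
    · exact (hb_cont (p + 1)).comp continuous_snd
  have hIcont : ∀ (u : BoundedContinuousFunction (ℝ × ℝ) ℝ) (p : ℕ) (q : ℝ × ℝ),
      Continuous fun σ => ∫ τ in b p q.2..b (p + 1) q.2,
        k (p + 1) q (σ, τ) * φ (W (σ, τ) * u (σ, τ)) := by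
    intro u p q
    apply contParamII (F := fun σ τ => k (p + 1) q (σ, τ) * φ (W (σ, τ) * u (σ, τ)))
      _ continuous_const continuous_const
    apply Continuous.mul
    · exact (hk_cont (p + 1)).comp (Continuous.prodMk_right q)
    · exact hφc.comp ((hW_cont.mul u.continuous).comp continuous_id)
  have hfcont : ∀ (u : BoundedContinuousFunction (ℝ × ℝ) ℝ) (p : ℕ) (q : ℝ × ℝ) (σ : ℝ),
      Continuous fun τ => k (p + 1) q (σ, τ) * φ (W (σ, τ) * u (σ, τ)) := by
    intro u p q σ
    apply Continuous.mul
    · exact (hk_cont (p + 1)).comp ((Continuous.prodMk_right q).comp (Continuous.prodMk_right σ))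
    · exact hφc.comp (((hW_cont.mul u.continuous)).comp (Continuous.prodMk_right σ))
  have habs_le_A : ∀ x y : ℝ, x ∈ Set.Icc 0 A → y ∈ Set.Icc 0 A → |x - y| ≤ A := by
    intro x y hx hy
    rw [abs_sub_le_iff]
    constructor
    · linarith [hx.2, hy.1]
    · linarith [hy.2, hx.1]
  -- boundedness: T maps into bounded continuous functions
  have hTex : ∀ u : BoundedContinuousFunction (ℝ × ℝ) ℝ,
      ∃ v : BoundedContinuousFunction (ℝ × ℝ) ℝ, ∀ q, v q = Tf u q := by
    intro u
    set B : ℝ := M * (|φ 0| + L * (Real.exp (l * (A + A)) * ‖u‖)) with hBdef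
    have hB0 : 0 ≤ B := by positivity
    have hin : ∀ p, p < m → ∀ (q : ℝ × ℝ) (σ τ : ℝ),
        |k (p + 1) q (σ, τ) * φ (W (σ, τ) * u (σ, τ))| ≤ B := by
      intro p hp q σ τ
      rw [abs_mul]
      have h2 : |W (σ, τ) * u (σ, τ)| ≤ Real.exp (l * (A + A)) * ‖u‖ := by
        rw [abs_mul, abs_of_pos (hW_pos _)]
        refine mul_le_mul (hW_le _) ?_ (abs_nonneg _) (Real.exp_pos _).le
        have := u.norm_coe_le_norm (σ, τ)
        rwa [Real.norm_eq_abs] at this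
      have h1 : |φ (W (σ, τ) * u (σ, τ))| ≤ |φ 0| + L * (Real.exp (l * (A + A)) * ‖u‖) := by
        refine (hφ_abs _).trans ?_
        have := mul_le_mul_of_nonneg_left h2 hL.le
        linarith
      exact mul_le_mul (hk_bd (p + 1) (by omega) _ _) h1 (abs_nonneg _) hM0.le
    have hinner : ∀ p, p < m → ∀ (q : ℝ × ℝ) (σ : ℝ),
        |∫ τ in b p q.2..b (p + 1) q.2, k (p + 1) q (σ, τ) * φ (W (σ, τ) * u (σ, τ))| ≤ B * A := by
      intro p hp q σ
      have h := intervalIntegral.norm_integral_le_of_norm_le_const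
        (a := b p q.2) (b := b (p + 1) q.2)
        (C := B) (f := fun τ => k (p + 1) q (σ, τ) * φ (W (σ, τ) * u (σ, τ)))
        (fun τ _ => by simp only [Real.norm_eq_abs]; exact hin p hp q σ τ)
      rw [Real.norm_eq_abs] at h
      refine h.trans ?_
      have h2 := habs_le_A _ _ (hb_mem (p + 1) q.2) (hb_mem p q.2)
      exact mul_le_mul_of_nonneg_left h2 hB0
    have houter : ∀ p, p < m → ∀ q : ℝ × ℝ,
        |∫ σ in a p q.1..a (p + 1) q.1, ∫ τ in b p q.2..b (p + 1) q.2,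
          k (p + 1) q (σ, τ) * φ (W (σ, τ) * u (σ, τ))| ≤ B * A * A := by
      intro p hp q
      have h := intervalIntegral.norm_integral_le_of_norm_le_const
        (a := a p q.1) (b := a (p + 1) q.1) (C := B * A)
        (f := fun σ => ∫ τ in b p q.2..b (p + 1) q.2, k (p + 1) q (σ, τ) * φ (W (σ, τ) * u (σ, τ)))
        (fun σ _ => by simp only [Real.norm_eq_abs]; exact hinner p hp q σ)
      rw [Real.norm_eq_abs] at h
      refine h.trans ?_
      have h2 := habs_le_A _ _ (ha_mem (p + 1) q.1) (ha_mem p q.1)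
      exact mul_le_mul_of_nonneg_left h2 (by positivity)
    have hbdd : ∀ q, |Tf u q| ≤ M + m * (B * A * A) := by
      intro q
      simp only [hTfdef]
      rw [abs_mul, abs_inv, abs_of_pos (hW_pos q)]
      have h1 : (W q)⁻¹ ≤ 1 := inv_le_one_of_one_le₀ (hW_one q)
      have h2 : |g q + ∑ p ∈ Finset.range m,
          ∫ σ in a p q.1..a (p + 1) q.1, ∫ τ in b p q.2..b (p + 1) q.2,
            k (p + 1) q (σ, τ) * φ (W (σ, τ) * u (σ, τ))| ≤ M + m * (B * A * A) := by
        refine (abs_add_le _ _).trans (add_le_add (hg_bd q) ?_)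
        refine (Finset.abs_sum_le_sum_abs _ _).trans ?_
        calc ∑ p ∈ Finset.range m, |∫ σ in a p q.1..a (p + 1) q.1,
              ∫ τ in b p q.2..b (p + 1) q.2, k (p + 1) q (σ, τ) * φ (W (σ, τ) * u (σ, τ))|
            ≤ ∑ _p ∈ Finset.range m, (B * A * A) :=
              Finset.sum_le_sum fun p hp => houter p (Finset.mem_range.mp hp) q
          _ = m * (B * A * A) := by simp [Finset.sum_const, nsmul_eq_mul]
      calc (W q)⁻¹ * |g q + _| ≤ 1 * (M + m * (B * A * A)) :=
            mul_le_mul h1 h2 (abs_nonneg _) zero_le_one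
        _ = M + m * (B * A * A) := one_mul _
    exact ⟨BoundedContinuousFunction.ofNormedAddCommGroup (Tf u) (hTf_cont u)
      (M + m * (B * A * A)) (fun q => by simpa [Real.norm_eq_abs] using hbdd q), fun q => rfl⟩
  choose T hT using hTex
  -- exponential integral
  have hExp : ∀ c d : ℝ, (∫ x in c..d, Real.exp (l * x))
      = (Real.exp (l * d) - Real.exp (l * c)) / l := by
    intro c d
    rw [intervalIntegral.integral_comp_mul_left (fun x => Real.exp x) hl0.ne']
    simp only [integral_exp, smul_eq_mul]
    field_simp
  -- chain for the b family
  have chain : ∀ (f : ℕ → ℝ), (∀ p, p < m → f p ≤ f (p + 1)) →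
      ∀ j, j ≤ m → ∀ i, i ≤ j → f i ≤ f j := by
    intro f hf j
    induction j with
    | zero => intro _ i hi; rw [Nat.le_zero.mp hi]
    | succ n ih =>
      intro hjm i hi
      rcases Nat.eq_or_lt_of_le hi with h | h
      · rw [h]
      · exact (ih (by omega) i (by omega)).trans (hf n (by omega))
  have hb_le : ∀ p, p ≤ m → ∀ t, b p t ≤ vcl A t := by
    intro p hp t
    have h := chain (fun i => b i t) (fun i hi => hb_mono i hi t) m le_rfl p hp
    exact le_of_le_of_eq h (hbm t)
  -- the contraction estimate
  have hcontr : ∀ u1 u2 : BoundedContinuousFunction (ℝ × ℝ) ℝ,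
      dist (T u1) (T u2) ≤ (1 / 2) * dist u1 u2 := by
    intro u1 u2
    have hD0 : (0:ℝ) ≤ dist u1 u2 := dist_nonneg
    rw [BoundedContinuousFunction.dist_le (by positivity)]
    rintro ⟨s, t⟩
    rw [Real.dist_eq, hT u1 (s, t), hT u2 (s, t)]
    set D := dist u1 u2 with hDdef
    have hudiff : ∀ q : ℝ × ℝ, |u1 q - u2 q| ≤ D := by
      intro q
      have := BoundedContinuousFunction.dist_coe_le_dist (f := u1) (g := u2) q
      rwa [Real.dist_eq] at this
    set Ea : ℕ → ℝ := fun p => ∫ σ in a p s..a (p + 1) s, Real.exp (l * σ) with hEadef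
    set Eb : ℕ → ℝ := fun p => ∫ τ in b p t..b (p + 1) t, Real.exp (l * τ) with hEbdef
    have hEa : ∀ p, Ea p = (Real.exp (l * a (p + 1) s) - Real.exp (l * a p s)) / l :=
      fun p => hExp _ _
    have hEb : ∀ p, Eb p = (Real.exp (l * b (p + 1) t) - Real.exp (l * b p t)) / l :=
      fun p => hExp _ _
    have hEa0 : ∀ p, p < m → 0 ≤ Ea p := by
      intro p hp
      rw [hEa]
      apply div_nonneg _ hl0.le
      have h1 := ha_mono p hp s
      have h2 := Real.exp_le_exp.2 (mul_le_mul_of_nonneg_left h1 hl0.le)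
      linarith
    have hEb0 : ∀ p, p < m → 0 ≤ Eb p := by
      intro p hp
      rw [hEb]
      apply div_nonneg _ hl0.le
      have h1 := hb_mono p hp t
      have h2 := Real.exp_le_exp.2 (mul_le_mul_of_nonneg_left h1 hl0.le)
      linarith
    have hEble : ∀ p, p < m → Eb p ≤ Real.exp (l * vcl A t) / l := by
      intro p hp
      rw [hEb]
      apply div_le_div_of_nonneg_right ?_ hl0.le
      have h1 : b (p + 1) t ≤ vcl A t := hb_le (p + 1) (by omega) t
      have h2 : (1:ℝ) ≤ Real.exp (l * b p t) := by
        have := Real.exp_le_exp.2 (mul_nonneg hl0.le (hb_mem p t).1)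
        simpa using this
      have h3 := Real.exp_le_exp.2 (mul_le_mul_of_nonneg_left h1 hl0.le)
      linarith
    have hEasum : ∑ p ∈ Finset.range m, Ea p = (Real.exp (l * vcl A s) - 1) / l := by
      have hcg : ∀ p ∈ Finset.range m, Ea p
          = Real.exp (l * a (p + 1) s) / l - Real.exp (l * a p s) / l := by
        intro p hp
        rw [hEa p, sub_div]
      rw [Finset.sum_congr rfl hcg, Finset.sum_range_sub (fun p => Real.exp (l * a p s) / l)]
      rw [ham s, ha0 s]
      rw [mul_zero, Real.exp_zero, sub_div]
    have hsum : ∑ p ∈ Finset.range m, Ea p * Eb p ≤ W (s, t) / (l * l) := by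
      have step1 : ∑ p ∈ Finset.range m, Ea p * Eb p
          ≤ ∑ p ∈ Finset.range m, Ea p * (Real.exp (l * vcl A t) / l) :=
        Finset.sum_le_sum fun p hp => mul_le_mul_of_nonneg_left
          (hEble p (Finset.mem_range.mp hp)) (hEa0 p (Finset.mem_range.mp hp))
      have step2 : ∑ p ∈ Finset.range m, Ea p * (Real.exp (l * vcl A t) / l)
          = ((Real.exp (l * vcl A s) - 1) / l) * (Real.exp (l * vcl A t) / l) := by
        rw [← Finset.sum_mul, hEasum]
      have step3 : ((Real.exp (l * vcl A s) - 1) / l) * (Real.exp (l * vcl A t) / l)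
          ≤ (Real.exp (l * vcl A s) / l) * (Real.exp (l * vcl A t) / l) := by
        apply mul_le_mul_of_nonneg_right _ (by positivity)
        apply div_le_div_of_nonneg_right _ hl0.le
        linarith
      have step4 : (Real.exp (l * vcl A s) / l) * (Real.exp (l * vcl A t) / l)
          = W (s, t) / (l * l) := by
        simp only [hWdef]
        rw [mul_add, Real.exp_add]
        field_simp
      linarith
    -- difference of the double integrals
    have hJ : ∀ p, p < m →
        |(∫ σ in a p s..a (p + 1) s, ∫ τ in b p t..b (p + 1) t,
            k (p + 1) (s, t) (σ, τ) * φ (W (σ, τ) * u1 (σ, τ)))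
          - ∫ σ in a p s..a (p + 1) s, ∫ τ in b p t..b (p + 1) t,
            k (p + 1) (s, t) (σ, τ) * φ (W (σ, τ) * u2 (σ, τ))|
          ≤ M * L * D * (Ea p * Eb p) := by
      intro p hp
      have hab : a p s ≤ a (p + 1) s := ha_mono p hp s
      have hcd : b p t ≤ b (p + 1) t := hb_mono p hp t
      have hc1 := hIcont u1 p (s, t)
      have hc2 := hIcont u2 p (s, t)
      rw [← intervalIntegral.integral_sub (hc1.intervalIntegrable _ _)
        (hc2.intervalIntegrable _ _)]
      refine (intervalIntegral.abs_integral_le_integral_abs hab).trans ?_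
      have hinb : ∀ σ ∈ Set.Icc (a p s) (a (p + 1) s),
          |(∫ τ in b p t..b (p + 1) t, k (p + 1) (s, t) (σ, τ) * φ (W (σ, τ) * u1 (σ, τ)))
            - ∫ τ in b p t..b (p + 1) t, k (p + 1) (s, t) (σ, τ) * φ (W (σ, τ) * u2 (σ, τ))|
            ≤ M * L * D * Eb p * Real.exp (l * σ) := by
        intro σ hσ
        have hσA : σ ∈ Set.Icc 0 A :=
          ⟨le_trans (ha_mem p s).1 hσ.1, le_trans hσ.2 (ha_mem (p + 1) s).2⟩
        have hf1 := hfcont u1 p (s, t) σ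
        have hf2 := hfcont u2 p (s, t) σ
        rw [← intervalIntegral.integral_sub (hf1.intervalIntegrable _ _)
          (hf2.intervalIntegrable _ _)]
        refine (intervalIntegral.abs_integral_le_integral_abs hcd).trans ?_
        have hptw : ∀ τ ∈ Set.Icc (b p t) (b (p + 1) t),
            |k (p + 1) (s, t) (σ, τ) * φ (W (σ, τ) * u1 (σ, τ))
              - k (p + 1) (s, t) (σ, τ) * φ (W (σ, τ) * u2 (σ, τ))|
              ≤ (M * L * D * Real.exp (l * σ)) * Real.exp (l * τ) := by
          intro τ hτ
          have hτA : τ ∈ Set.Icc 0 A :=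
            ⟨le_trans (hb_mem p t).1 hτ.1, le_trans hτ.2 (hb_mem (p + 1) t).2⟩
          rw [← mul_sub, abs_mul]
          have h1 : |φ (W (σ, τ) * u1 (σ, τ)) - φ (W (σ, τ) * u2 (σ, τ))|
              ≤ L * (W (σ, τ) * D) := by
            refine (hφ _ _).trans ?_
            rw [← mul_sub, abs_mul, abs_of_pos (hW_pos _)]
            exact mul_le_mul_of_nonneg_left
              (mul_le_mul_of_nonneg_left (hudiff _) (hW_pos _).le) hL.le
          calc |k (p + 1) (s, t) (σ, τ)| * |φ (W (σ, τ) * u1 (σ, τ)) - φ (W (σ, τ) * u2 (σ, τ))|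
              ≤ M * (L * (W (σ, τ) * D)) :=
                mul_le_mul (hk_bd (p + 1) (by omega) _ _) h1 (abs_nonneg _) hM0.le
            _ = (M * L * D * Real.exp (l * σ)) * Real.exp (l * τ) := by
                rw [hW_eq σ τ hσA hτA]; ring
        calc (∫ τ in b p t..b (p + 1) t,
              |k (p + 1) (s, t) (σ, τ) * φ (W (σ, τ) * u1 (σ, τ))
                - k (p + 1) (s, t) (σ, τ) * φ (W (σ, τ) * u2 (σ, τ))|)
            ≤ ∫ τ in b p t..b (p + 1) t, (M * L * D * Real.exp (l * σ)) * Real.exp (l * τ) :=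
              intervalIntegral.integral_mono_on hcd
                ((hf1.sub hf2).abs.intervalIntegrable _ _)
                ((continuous_const.mul (Real.continuous_exp.comp
                  (continuous_const.mul continuous_id))).intervalIntegrable _ _)
                hptw
          _ = (M * L * D * Real.exp (l * σ)) * Eb p := by
              rw [intervalIntegral.integral_const_mul]
          _ = M * L * D * Eb p * Real.exp (l * σ) := by ring
      calc (∫ σ in a p s..a (p + 1) s,
            |(∫ τ in b p t..b (p + 1) t, k (p + 1) (s, t) (σ, τ) * φ (W (σ, τ) * u1 (σ, τ)))
              - ∫ τ in b p t..b (p + 1) t, k (p + 1) (s, t) (σ, τ) * φ (W (σ, τ) * u2 (σ, τ))|)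
          ≤ ∫ σ in a p s..a (p + 1) s, (M * L * D * Eb p) * Real.exp (l * σ) := by
            refine intervalIntegral.integral_mono_on hab
              ((hc1.sub hc2).abs.intervalIntegrable _ _)
              ((continuous_const.mul (Real.continuous_exp.comp
                (continuous_const.mul continuous_id))).intervalIntegrable _ _) ?_
            intro σ hσ
            have := hinb σ hσ
            linarith [this]
        _ = (M * L * D * Eb p) * Ea p := by rw [intervalIntegral.integral_const_mul]
        _ = M * L * D * (Ea p * Eb p) := by ring
    -- assemble the contraction bound
    have hdiff : Tf u1 (s, t) - Tf u2 (s, t) = (W (s, t))⁻¹ *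
        ∑ p ∈ Finset.range m,
          ((∫ σ in a p s..a (p + 1) s, ∫ τ in b p t..b (p + 1) t,
              k (p + 1) (s, t) (σ, τ) * φ (W (σ, τ) * u1 (σ, τ)))
            - ∫ σ in a p s..a (p + 1) s, ∫ τ in b p t..b (p + 1) t,
              k (p + 1) (s, t) (σ, τ) * φ (W (σ, τ) * u2 (σ, τ))) := by
      simp only [hTfdef]
      rw [Finset.sum_sub_distrib]
      ring
    rw [hdiff, abs_mul, abs_inv, abs_of_pos (hW_pos _)]
    have h1 := Finset.abs_sum_le_sum_abs
      (fun p => (∫ σ in a p s..a (p + 1) s, ∫ τ in b p t..b (p + 1) t,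
          k (p + 1) (s, t) (σ, τ) * φ (W (σ, τ) * u1 (σ, τ)))
        - ∫ σ in a p s..a (p + 1) s, ∫ τ in b p t..b (p + 1) t,
          k (p + 1) (s, t) (σ, τ) * φ (W (σ, τ) * u2 (σ, τ))) (Finset.range m)
    have h2 : ∑ p ∈ Finset.range m,
        |(∫ σ in a p s..a (p + 1) s, ∫ τ in b p t..b (p + 1) t,
            k (p + 1) (s, t) (σ, τ) * φ (W (σ, τ) * u1 (σ, τ)))
          - ∫ σ in a p s..a (p + 1) s, ∫ τ in b p t..b (p + 1) t,
            k (p + 1) (s, t) (σ, τ) * φ (W (σ, τ) * u2 (σ, τ))|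
        ≤ M * L * D * (W (s, t) / (l * l)) := by
      calc _ ≤ ∑ p ∈ Finset.range m, M * L * D * (Ea p * Eb p) :=
            Finset.sum_le_sum fun p hp => hJ p (Finset.mem_range.mp hp)
        _ = M * L * D * ∑ p ∈ Finset.range m, Ea p * Eb p := by rw [Finset.mul_sum]
        _ ≤ M * L * D * (W (s, t) / (l * l)) :=
            mul_le_mul_of_nonneg_left hsum (by positivity)
    calc (W (s, t))⁻¹ * |∑ p ∈ Finset.range m, _|
        ≤ (W (s, t))⁻¹ * (M * L * D * (W (s, t) / (l * l))) :=
          mul_le_mul_of_nonneg_left (h1.trans h2) (inv_nonneg.2 (hW_pos _).le)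
      _ = (1 / 2) * D := by
          rw [hll]
          have hWne := (hW_pos (s, t)).ne'
          field_simp
  -- Banach fixed point
  have hlip : LipschitzWith (1 / 2 : NNReal) T := by
    apply LipschitzWith.of_dist_le_mul
    intro u1 u2
    have := hcontr u1 u2
    have hc : ((1 / 2 : NNReal) : ℝ) = 1 / 2 := by norm_num
    rw [hc]
    exact this
  have hCW : ContractingWith (1 / 2) T :=
    ⟨by exact_mod_cast (by norm_num : (1 / 2 : ℝ) < 1), hlip⟩
  set u := ContractingWith.fixedPoint T hCW with hudef
  have huf : T u = u := hCW.fixedPoint_isFixedPt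
  have hueq : ∀ q, (u : ℝ × ℝ → ℝ) q = Tf u q := by
    intro q
    conv_lhs => rw [← huf]
    exact hT u q
  refine ⟨fun q => W q * u q, hW_cont.mul u.continuous, fun s t => ?_⟩
  show W (s, t) * u (s, t) = _
  rw [hueq (s, t)]
  simp only [hTfdef]
  rw [← mul_assoc, mul_inv_cancel₀ (hW_pos (s, t)).ne', one_mul]

theorem volterra_2d_piecewise_existence
    (A : ℝ) (hA : 0 < A) (m : ℕ)
    (a b : ℕ → ℝ → ℝ)
    (ha_cont : ∀ p, ContinuousOn (a p) (Set.Icc 0 A))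
    (hb_cont : ∀ p, ContinuousOn (b p) (Set.Icc 0 A))
    (ha_maps : ∀ p, ∀ s ∈ Set.Icc 0 A, a p s ∈ Set.Icc 0 A)
    (hb_maps : ∀ p, ∀ t ∈ Set.Icc 0 A, b p t ∈ Set.Icc 0 A)
    (ha0 : ∀ s ∈ Set.Icc 0 A, a 0 s = 0)
    (ham : ∀ s ∈ Set.Icc 0 A, a m s = s)
    (ha_mono : ∀ p < m, ∀ s ∈ Set.Icc 0 A, a p s ≤ a (p + 1) s)
    (hb0 : ∀ t ∈ Set.Icc 0 A, b 0 t = 0)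
    (hbm : ∀ t ∈ Set.Icc 0 A, b m t = t)
    (hb_mono : ∀ p < m, ∀ t ∈ Set.Icc 0 A, b p t ≤ b (p + 1) t)
    (k : ℕ → ℝ × ℝ → ℝ × ℝ → ℝ)
    (hk_cont : ∀ p, ContinuousOn (fun q : (ℝ × ℝ) × (ℝ × ℝ) => k p q.1 q.2)
      ((Set.Icc 0 A ×ˢ Set.Icc 0 A) ×ˢ (Set.Icc 0 A ×ˢ Set.Icc 0 A)))
    (hk_nonneg : ∀ p, ∀ x ∈ Set.Icc 0 A ×ˢ Set.Icc 0 A,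
      ∀ w ∈ Set.Icc 0 A ×ˢ Set.Icc 0 A, (0:ℝ) ≤ k p x w)
    (g : ℝ × ℝ → ℝ) (hg : ContinuousOn g (Set.Icc 0 A ×ˢ Set.Icc 0 A))
    (φ : ℝ → ℝ) (L : ℝ) (hL : 0 < L)
    (hφ : ∀ x y : ℝ, |φ x - φ y| ≤ L * |x - y|) :
    ∃ z : ℝ × ℝ → ℝ, ContinuousOn z (Set.Icc 0 A ×ˢ Set.Icc 0 A) ∧
      ∀ s ∈ Set.Icc 0 A, ∀ t ∈ Set.Icc 0 A,
        z (s, t) = g (s, t) + ∑ p ∈ Finset.range m,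
          ∫ σ in (a p s)..(a (p + 1) s), ∫ τ in (b p t)..(b (p + 1) t),
            k (p + 1) (s, t) (σ, τ) * φ (z (σ, τ)) := by
  classical
  -- clamped data
  set c : ℝ → ℝ := vcl A with hc
  have hc_mem : ∀ x, c x ∈ Set.Icc 0 A := vcl_mem hA
  -- bounds via compactness
  have hKc : IsCompact ((Set.Icc 0 A ×ˢ Set.Icc 0 A) ×ˢ (Set.Icc (0:ℝ) A ×ˢ Set.Icc 0 A)) :=
    ((isCompact_Icc.prod isCompact_Icc).prod (isCompact_Icc.prod isCompact_Icc))
  choose C hC using fun p => hKc.exists_bound_of_continuousOn (hk_cont p)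
  obtain ⟨Cg, hCg⟩ := (isCompact_Icc.prod isCompact_Icc).exists_bound_of_continuousOn hg
  set M : ℝ := 1 + |Cg| + ∑ p ∈ Finset.range (m + 1), |C p| with hMdef
  have hsum_nonneg : (0:ℝ) ≤ ∑ p ∈ Finset.range (m + 1), |C p| :=
    Finset.sum_nonneg fun i _ => abs_nonneg _
  have hM : 1 ≤ M := by
    have := abs_nonneg Cg; simp only [hMdef]; linarith
  obtain ⟨z, hz_cont, hz_eq⟩ := volterra_aux A hA m
    (fun p s => c (a p (c s))) (fun p t => c (b p (c t)))
    (fun p => (vcl_cont A).comp (((ha_cont p).comp_continuous (vcl_cont A) hc_mem)))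
    (fun p => (vcl_cont A).comp (((hb_cont p).comp_continuous (vcl_cont A) hc_mem)))
    (fun p s => hc_mem _) (fun p t => hc_mem _)
    (fun p hp s => vcl_mono A (ha_mono p hp (c s) (hc_mem s)))
    (fun p hp t => vcl_mono A (hb_mono p hp (c t) (hc_mem t)))
    (fun s => by show c (a 0 (c s)) = 0; rw [ha0 (c s) (hc_mem s)]; exact vcl_id ⟨le_rfl, hA.le⟩)
    (fun t => by show c (b 0 (c t)) = 0; rw [hb0 (c t) (hc_mem t)]; exact vcl_id ⟨le_rfl, hA.le⟩)
    (fun s => by show c (a m (c s)) = vcl A s; rw [ham (c s) (hc_mem s)]; exact vcl_id (hc_mem s))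
    (fun t => by show c (b m (c t)) = vcl A t; rw [hbm (c t) (hc_mem t)]; exact vcl_id (hc_mem t))
    (fun p x w => k p (c x.1, c x.2) (c w.1, c w.2))
    (fun p => by
      apply (hk_cont p).comp_continuous
        (f := fun q : (ℝ × ℝ) × (ℝ × ℝ) => ((c q.1.1, c q.1.2), (c q.2.1, c q.2.2)))
      · exact ((((vcl_cont A).comp (continuous_fst.comp continuous_fst)).prodMk
          ((vcl_cont A).comp (continuous_snd.comp continuous_fst))).prodMk
          (((vcl_cont A).comp (continuous_fst.comp continuous_snd)).prodMk
          ((vcl_cont A).comp (continuous_snd.comp continuous_snd))))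
      · exact fun q => ⟨⟨hc_mem _, hc_mem _⟩, hc_mem _, hc_mem _⟩)
    M hM
    (fun p hp x w => by
      refine le_trans (hC p ((c x.1, c x.2), (c w.1, c w.2))
        ⟨⟨hc_mem _, hc_mem _⟩, ⟨hc_mem _, hc_mem _⟩⟩) ?_
      have h1 : C p ≤ |C p| := le_abs_self _
      have h2 : |C p| ≤ ∑ q ∈ Finset.range (m + 1), |C q| :=
        Finset.single_le_sum (fun i _ => abs_nonneg (C i)) (Finset.mem_range.2 (by omega))
      have := abs_nonneg Cg
      simp only [hMdef]; linarith)
    (fun q => g (c q.1, c q.2))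
    (by
      apply hg.comp_continuous (f := fun q : ℝ × ℝ => (c q.1, c q.2))
      · exact ((vcl_cont A).comp continuous_fst).prodMk ((vcl_cont A).comp continuous_snd)
      · exact fun q => ⟨hc_mem _, hc_mem _⟩)
    (fun q => by
      refine le_trans (hCg (c q.1, c q.2) ⟨hc_mem _, hc_mem _⟩) ?_
      have h1 : Cg ≤ |Cg| := le_abs_self _
      simp only [hMdef]; linarith)
    φ L hL hφ
  refine ⟨z, hz_cont.continuousOn, fun s hs t ht => ?_⟩
  have hcs : c s = s := vcl_id hs
  have hct : c t = t := vcl_id ht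
  have hva : ∀ p, c (a p s) = a p s := fun p => vcl_id (ha_maps p s hs)
  have hvb : ∀ p, c (b p t) = b p t := fun p => vcl_id (hb_maps p t ht)
  have := hz_eq s t
  rw [hcs, hct] at this
  simp only [hva, hvb] at this
  rw [this]
  congr 1
  refine Finset.sum_congr rfl fun p hp => ?_
  have hp' := Finset.mem_range.mp hp
  refine intervalIntegral.integral_congr fun σ hσ => ?_
  have hσ' : σ ∈ Set.Icc 0 A := by
    rw [Set.uIcc_of_le (ha_mono p hp' s hs)] at hσ
    exact ⟨le_trans (ha_maps p s hs).1 hσ.1, le_trans hσ.2 (ha_maps (p+1) s hs).2⟩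
  refine intervalIntegral.integral_congr fun τ hτ => ?_
  have hτ' : τ ∈ Set.Icc 0 A := by
    rw [Set.uIcc_of_le (hb_mono p hp' t ht)] at hτ
    exact ⟨le_trans (hb_maps p t ht).1 hτ.1, le_trans hτ.2 (hb_maps (p+1) t ht).2⟩
  have e1 : c σ = σ := vcl_id hσ'
  have e2 : c τ = τ := vcl_id hτ'
  rw [e1, e2]
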